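/- Let p be a prime, q a power of p, and 1 ≤ s < q. If k is a nonnegative integer such that q divides k - i for some 0 ≤ i ≤ s-1, then v_p(s!) < v_p(k(k-1)⋯(k-s+1)). -/

import Mathlib

theorem stmt_1 (p q m s : ℕ) (hp : p.Prime) (hq : q = p ^ m)
    (hs1 : 1 ≤ s) (hsq : s < q) (k : ℕ)
    (hdvd : ∃ i < s, (q : ℤ) ∣ (k : ℤ) - (i : ℤ)) :
    emultiplicity p (Nat.factorial s) < emultiplicity p (Nat.descFactorial k s) := by
  obtain ⟨i, his, hdvd⟩ := hdvd
  have hfin : emultiplicity p (Nat.factorial s) ≠ ⊤ :=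
    finiteMultiplicity_iff_emultiplicity_ne_top.1 (Nat.finiteMultiplicity_iff.2 ⟨hp.ne_one, Nat.factorial_pos s⟩)
  rcases lt_or_ge k s with hks | hks
  · rw [Nat.descFactorial_eq_zero_iff_lt.2 hks, emultiplicity_zero]
    exact lt_of_le_of_ne le_top hfin
  · have hqpos : 0 < q := by omega
    have hm1 : 1 ≤ m := by
      rcases Nat.eq_zero_or_pos m with rfl | h
      · simp [hq] at hsq; omega
      · exact h
    have hkmod : k % q = i := by
      obtain ⟨t, ht⟩ := hdvd
      have htpos : 0 ≤ t := by
        have : (0:ℤ) ≤ (k:ℤ) - i := by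
          have : (i:ℤ) ≤ k := by exact_mod_cast (his.trans_le hks).le
          omega
        nlinarith [this, ht, (by exact_mod_cast hqpos : (0:ℤ) < (q:ℤ))]
      have hk : k = i + q * t.toNat := by
        have : (k:ℤ) = i + q * t := by omega
        have := this
        zify
        rw [Int.toNat_of_nonneg htpos] at *
        omega
      rw [hk, Nat.add_mul_mod_self_left, Nat.mod_eq_of_lt (by omega)]
    rw [hq] at hkmod
    have hcarry : p ^ m ≤ s % p ^ m + (k - s) % p ^ m := by
      by_contra h
      push_neg at h
      have hsmod : s % p ^ m = s := Nat.mod_eq_of_lt (hq ▸ hsq)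
      have hthis : k % p ^ m = (k - s) % p ^ m + s % p ^ m := by
        conv_lhs => rw [← Nat.sub_add_cancel hks]
        rw [Nat.add_mod, Nat.mod_eq_of_lt (by omega)]
      rw [hsmod, hkmod] at hthis
      exact absurd (hthis ▸ Nat.le_add_left s _) (not_le.2 his)
    set b := max (Nat.log p k + 1) (m + 1) with hb
    have hlog : Nat.log p k < b := by omega
    have hchoose : 1 ≤ emultiplicity p (Nat.choose k s) := by
      rw [Nat.Prime.emultiplicity_choose hp hks hlog]
      have hmem : m ∈ Finset.filter (fun j => p ^ j ≤ s % p ^ j + (k - s) % p ^ j)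
          (Finset.Ico 1 b) := by
        simp only [Finset.mem_filter, Finset.mem_Ico]
        exact ⟨⟨hm1, by omega⟩, hcarry⟩
      have : 1 ≤ (Finset.filter (fun j => p ^ j ≤ s % p ^ j + (k - s) % p ^ j)
          (Finset.Ico 1 b)).card := Finset.card_pos.2 ⟨m, hmem⟩
      exact_mod_cast this
    rw [Nat.descFactorial_eq_factorial_mul_choose, emultiplicity_mul hp.prime]
    calc emultiplicity p s.factorial
        < emultiplicity p s.factorial + 1 := (ENat.lt_add_one_iff hfin).2 le_rfl
      _ ≤ emultiplicity p s.factorial + emultiplicity p (Nat.choose k s) :=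
          add_le_add_right hchoose _
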